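/- arXiv:math/0602596 — 2 statements merged into one kernel-verified Lean document; each statement's English description precedes it below -/
import Mathlib

section
/- In the exterior algebra Λ over the differential polynomial algebra, generated by odd variables θ_k (k ≥ 0) with total derivative ∂ extended by ∂θ_k = θ_{k+1}, the partial derivative operators satisfy ∂/∂θ_i = Σ_{j≥i} C(j,i)·∂^{j−i} ∘ δ_{j,θ}, where δ_{j,θ} = Σ_{r≥0} (−1)^r·C(j+r, j)·∂^r ∘ ∂/∂θ_{j+r} is the j-th higher variational derivative with respect to θ. -/
open MvPolynomial

/-- The differential polynomial algebra `A = ℝ[u₀, u₁, u₂, …]`. -/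
abbrev A := MvPolynomial ℕ ℝ

/-- The exterior algebra `Λ` over `A` on the odd generators `θ_k`, modeled as formal
`A`-linear combinations of ordered monomials `θ_S = θ_{s₁}∧⋯∧θ_{s_r}` indexed by
finite sets `S ⊆ ℕ`. -/
abbrev Lam := (Finset ℕ) →₀ A

/-- The total derivative on `A`, sending `u_j` to `u_{j+1}`. -/
noncomputable def totD : Derivation ℝ A A :=
  MvPolynomial.mkDerivation ℝ (fun j => MvPolynomial.X (j + 1))

/-- The Koszul sign of extracting `θ_i` from the front of the ordered monomial `θ_S`. -/
def sgn (i : ℕ) (S : Finset ℕ) : ℝ := (-1) ^ (S.filter (fun j => j < i)).card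

/-- The graded partial derivative `∂/∂θ_i` on `Λ`. -/
noncomputable def pTheta (i : ℕ) (F : Lam) : Lam :=
  F.sum fun S a => if i ∈ S then sgn i S • Finsupp.single (S.erase i) a else 0

/-- The total derivative `∂` on `Λ`, extended by `∂θ_k = θ_{k+1}`. -/
noncomputable def DLam (F : Lam) : Lam :=
  F.sum fun S a =>
    Finsupp.single S (totD a)
      + ∑ k ∈ S, (if k + 1 ∈ S then 0 else Finsupp.single (insert (k + 1) (S.erase k)) a)

/-- The higher variational derivative
`δ_{j,θ} = Σ_{r≥0} (−1)^r C(j+r, j) ∂^r ∘ ∂/∂θ_{j+r}`. -/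
noncomputable def hvarTheta (j : ℕ) (F : Lam) : Lam :=
  ∑ᶠ r : ℕ, ((-1 : ℝ) ^ r * ((j + r).choose j : ℝ)) • DLam^[r] (pTheta (j + r) F)

lemma DLam_add (F G : Lam) : DLam (F + G) = DLam F + DLam G := by
  unfold DLam
  rw [Finsupp.sum_add_index']
  · intro S; simp
  · intro S a b
    simp only [map_add, Finsupp.single_add]
    rw [show (∑ k ∈ S, if k + 1 ∈ S then (0:Lam) else
          (Finsupp.single (insert (k + 1) (S.erase k)) a + Finsupp.single (insert (k + 1) (S.erase k)) b))
        = (∑ k ∈ S, if k + 1 ∈ S then (0:Lam) else Finsupp.single (insert (k + 1) (S.erase k)) a)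
          + (∑ k ∈ S, if k + 1 ∈ S then (0:Lam) else Finsupp.single (insert (k + 1) (S.erase k)) b) from by
      rw [← Finset.sum_add_distrib]
      exact Finset.sum_congr rfl fun k _ => by split <;> simp]
    abel

lemma DLam_smul (c : ℝ) (F : Lam) : DLam (c • F) = c • DLam F := by
  unfold DLam
  rw [Finsupp.sum_smul_index', Finsupp.smul_sum]
  · apply Finsupp.sum_congr
    intro S _
    simp only [Derivation.map_smul, Finsupp.smul_single, smul_add, Finset.smul_sum]
    congr 1
    apply Finset.sum_congr rfl
    intro k _
    split <;> simp
  · intro S; simp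

/-- `DLam` as a linear map. -/
noncomputable def DLamL : Lam →ₗ[ℝ] Lam where
  toFun := DLam
  map_add' := DLam_add
  map_smul' := DLam_smul

lemma DLam_iter_eq (n : ℕ) : DLam^[n] = ⇑(DLamL ^ n) :=
  (Module.End.coe_pow DLamL n).symm

lemma pTheta_eq_zero (m : ℕ) (F : Lam) (h : ∀ S ∈ F.support, m ∉ S) : pTheta m F = 0 := by
  rw [pTheta, Finsupp.sum]
  exact Finset.sum_eq_zero fun S hS => if_neg (h S hS)

lemma diag {M : Type*} [AddCommMonoid M] [Module ℝ M] (t : ℕ → M) (c : ℕ → ℕ → ℝ) (P : ℕ)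
    (ht : ∀ k, P ≤ k → t k = 0) :
    ∑ a ∈ Finset.range P, ∑ r ∈ Finset.range P, c a r • t (a + r)
      = ∑ k ∈ Finset.range P, (∑ a ∈ Finset.range (k + 1), c a (k - a)) • t k := by
  have step1 : ∀ a, ∑ r ∈ Finset.range P, c a r • t (a + r)
      = ∑ k ∈ Finset.Ico a P, c a (k - a) • t k := by
    intro a
    rw [Finset.sum_Ico_eq_sum_range]
    rcases le_or_gt a P with h | h
    · rcases Nat.exists_eq_add_of_le h with ⟨Q, rfl⟩
      rw [Nat.add_sub_cancel_left]
      have : ∑ r ∈ Finset.range (a + Q), c a r • t (a + r)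
          = ∑ r ∈ Finset.range Q, c a r • t (a + r) := by
        apply (Finset.sum_subset (Finset.range_subset_range.2 (Nat.le_add_left _ _)) ?_).symm
        intro r hr hr'
        rw [ht (a + r) (by simp at hr hr' ⊢; omega), smul_zero]
      rw [this]
      exact Finset.sum_congr rfl fun r _ => by rw [Nat.add_sub_cancel_left]
    · have h1 : P - a = 0 := by omega
      rw [h1]
      simp only [Finset.range_zero, Finset.sum_empty]
      apply Finset.sum_eq_zero
      intro r _
      rw [ht (a + r) (by omega), smul_zero]
  calc ∑ a ∈ Finset.range P, ∑ r ∈ Finset.range P, c a r • t (a + r)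
      = ∑ a ∈ Finset.Ico 0 P, ∑ k ∈ Finset.Ico a P, c a (k - a) • t k := by
        rw [← Finset.range_eq_Ico]; exact Finset.sum_congr rfl fun a _ => step1 a
    _ = ∑ k ∈ Finset.Ico 0 P, ∑ a ∈ Finset.Ico 0 (k + 1), c a (k - a) • t k :=
        Finset.sum_Ico_Ico_comm 0 P _
    _ = ∑ k ∈ Finset.range P, (∑ a ∈ Finset.range (k + 1), c a (k - a)) • t k := by
        rw [← Finset.range_eq_Ico]
        exact Finset.sum_congr rfl fun k _ => by rw [← Finset.range_eq_Ico]; exact Finset.sum_smul.symm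

lemma alt_real (k : ℕ) :
    ∑ a ∈ Finset.range (k + 1), (-1 : ℝ) ^ (k - a) * (k.choose a : ℝ)
      = if k = 0 then 1 else 0 := by
  have hrefl := Finset.sum_range_reflect (fun a => (-1 : ℝ) ^ (k - a) * (k.choose a : ℝ)) (k + 1)
  rw [← hrefl]
  have : ∀ j ∈ Finset.range (k + 1),
      (-1 : ℝ) ^ (k - (k + 1 - 1 - j)) * (k.choose (k + 1 - 1 - j) : ℝ)
        = (-1 : ℝ) ^ j * (k.choose j : ℝ) := by
    intro j hj
    simp only [Finset.mem_range, Nat.lt_succ_iff] at hj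
    rw [show k + 1 - 1 - j = k - j by omega, show k - (k - j) = j by omega,
      Nat.choose_symm hj]
  rw [Finset.sum_congr rfl this]
  have h := Int.alternating_sum_range_choose (n := k)
  have : ((∑ m ∈ Finset.range (k + 1), ((-1) ^ m * k.choose m : ℤ) : ℤ) : ℝ)
      = ∑ m ∈ Finset.range (k + 1), (-1 : ℝ) ^ m * (k.choose m : ℝ) := by
    push_cast [mul_comm]; ring_nf
  rw [← this, h]
  split <;> simp

lemma key (i k : ℕ) :
    ∑ a ∈ Finset.range (k + 1),
        ((i + a).choose i : ℝ) * ((-1 : ℝ) ^ (k - a) * (((i + a) + (k - a)).choose (i + a) : ℝ))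
      = if k = 0 then 1 else 0 := by
  have h1 : ∀ a ∈ Finset.range (k + 1),
      ((i + a).choose i : ℝ) * ((-1 : ℝ) ^ (k - a) * (((i + a) + (k - a)).choose (i + a) : ℝ))
        = ((i + k).choose i : ℝ) * ((-1 : ℝ) ^ (k - a) * (k.choose a : ℝ)) := by
    intro a ha
    simp only [Finset.mem_range, Nat.lt_succ_iff] at ha
    rw [show (i + a) + (k - a) = i + k by omega]
    have hn := Nat.choose_mul (n := i + k) (k := i + a) (s := i) (by omega)
    rw [show (i + k) - i = k by omega, show (i + a) - i = a by omega] at hn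
    have hc : (((i + k).choose (i + a) * (i + a).choose i : ℕ) : ℝ)
        = (((i + k).choose i * k.choose a : ℕ) : ℝ) := by rw [hn]
    push_cast at hc
    calc ((i + a).choose i : ℝ) * ((-1 : ℝ) ^ (k - a) * ((i + k).choose (i + a) : ℝ))
        = ((-1 : ℝ) ^ (k - a)) * (((i + k).choose (i + a) : ℝ) * ((i + a).choose i : ℝ)) := by ring
      _ = ((-1 : ℝ) ^ (k - a)) * (((i + k).choose i : ℝ) * (k.choose a : ℝ)) := by rw [hc]
      _ = ((i + k).choose i : ℝ) * ((-1 : ℝ) ^ (k - a) * (k.choose a : ℝ)) := by ring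
  rw [Finset.sum_congr rfl h1, ← Finset.mul_sum, alt_real]
  split
  · rename_i hk; subst hk; simp
  · simp

/-- The operator identity `∂/∂θ_i = Σ_{j≥i} C(j, i) ∂^{j−i} ∘ δ_{j,θ}` on `Λ`
(the terms with `j < i` vanish since then `C(j, i) = 0`). -/
theorem pTheta_eq_sum_hvarTheta (i : ℕ) (F : Lam) :
    pTheta i F = ∑ᶠ j : ℕ, ((j.choose i : ℝ)) • DLam^[j - i] (hvarTheta j F) := by
  set B := F.support.sup (fun S => S.sup id) with hB
  have hz : ∀ r m, B < m → DLam^[r] (pTheta m F) = 0 := by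
    intro r m hm
    have h0 : pTheta m F = 0 := by
      apply pTheta_eq_zero
      intro S hS hmem
      have h1 : S.sup id ≤ B := Finset.le_sup (f := fun S => S.sup id) hS
      have h2 : m ≤ S.sup id := Finset.le_sup (f := id) hmem
      omega
    rw [h0, DLam_iter_eq, map_zero]
  set P := B + 1 with hP
  have hA : ∀ j, hvarTheta j F = ∑ r ∈ Finset.range P,
      ((-1 : ℝ) ^ r * ((j + r).choose j : ℝ)) • DLam^[r] (pTheta (j + r) F) := by
    intro j
    apply finsum_eq_sum_of_support_subset
    intro r hr
    simp only [Function.mem_support] at hr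
    simp only [Finset.coe_range, Set.mem_Iio]
    by_contra h
    exact hr (by rw [hz r (j + r) (by omega), smul_zero])
  have hvar0 : ∀ j, B < j → hvarTheta j F = 0 := by
    intro j hj
    rw [hA j]
    exact Finset.sum_eq_zero fun r _ => by rw [hz r (j + r) (by omega), smul_zero]
  have hRHS : (∑ᶠ j : ℕ, ((j.choose i : ℝ)) • DLam^[j - i] (hvarTheta j F))
      = ∑ j ∈ Finset.range (B + i + 1), ((j.choose i : ℝ)) • DLam^[j - i] (hvarTheta j F) := by
    apply finsum_eq_sum_of_support_subset
    intro j hj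
    simp only [Function.mem_support] at hj
    simp only [Finset.coe_range, Set.mem_Iio]
    by_contra h
    exact hj (by rw [hvar0 j (by omega), DLam_iter_eq, map_zero, smul_zero])
  have hC : ∀ j, ((j.choose i : ℝ)) • DLam^[j - i] (hvarTheta j F)
      = ∑ r ∈ Finset.range P, ((j.choose i : ℝ) * ((-1 : ℝ) ^ r * ((j + r).choose j : ℝ)))
          • DLam^[(j - i) + r] (pTheta (j + r) F) := by
    intro j
    rw [hA j, DLam_iter_eq, map_sum, Finset.smul_sum]
    refine Finset.sum_congr rfl fun r _ => ?_
    rw [map_smul, smul_smul, ← DLam_iter_eq, ← Function.iterate_add_apply]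
  rw [hRHS, Finset.sum_congr rfl fun j _ => hC j]
  rw [show ∑ j ∈ Finset.range (B + i + 1), ∑ r ∈ Finset.range P,
        ((j.choose i : ℝ) * ((-1 : ℝ) ^ r * ((j + r).choose j : ℝ)))
          • DLam^[(j - i) + r] (pTheta (j + r) F)
      = ∑ j ∈ Finset.Ico i (B + i + 1), ∑ r ∈ Finset.range P,
        ((j.choose i : ℝ) * ((-1 : ℝ) ^ r * ((j + r).choose j : ℝ)))
          • DLam^[(j - i) + r] (pTheta (j + r) F) from by
    refine (Finset.sum_subset ?_ ?_).symm
    · intro j hj; simp only [Finset.mem_Ico] at hj; simp only [Finset.mem_range]; omega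
    · intro j hj hj'
      simp only [Finset.mem_range] at hj
      simp only [Finset.mem_Ico] at hj'
      have hji : j < i := by omega
      apply Finset.sum_eq_zero
      intro r _
      rw [Nat.choose_eq_zero_of_lt hji]
      simp]
  rw [Finset.sum_Ico_eq_sum_range, show (B + i + 1) - i = P by omega]
  have hmatch : ∀ a ∈ Finset.range P, ∑ r ∈ Finset.range P,
        (((i + a).choose i : ℝ) * ((-1 : ℝ) ^ r * (((i + a) + r).choose (i + a) : ℝ)))
          • DLam^[((i + a) - i) + r] (pTheta ((i + a) + r) F)
      = ∑ r ∈ Finset.range P,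
        (fun a r => ((i + a).choose i : ℝ) * ((-1 : ℝ) ^ r * (((i + a) + r).choose (i + a) : ℝ))) a r
          • (fun k => DLam^[k] (pTheta (i + k) F)) (a + r) := by
    intro a _
    refine Finset.sum_congr rfl fun r _ => ?_
    simp only [show (i + a) - i = a by omega, Nat.add_assoc]
  rw [Finset.sum_congr rfl hmatch,
    diag (fun k => DLam^[k] (pTheta (i + k) F))
      (fun a r => ((i + a).choose i : ℝ) * ((-1 : ℝ) ^ r * (((i + a) + r).choose (i + a) : ℝ)))
      P (fun k hk => hz k (i + k) (by omega))]
  have hcoef : ∀ k ∈ Finset.range P,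
      (∑ a ∈ Finset.range (k + 1),
        ((i + a).choose i : ℝ) * ((-1 : ℝ) ^ (k - a) * (((i + a) + (k - a)).choose (i + a) : ℝ)))
        • DLam^[k] (pTheta (i + k) F)
      = (if k = 0 then (1 : ℝ) else 0) • DLam^[k] (pTheta (i + k) F) := by
    intro k _
    rw [key i k]
  rw [Finset.sum_congr rfl hcoef]
  rw [Finset.sum_eq_single_of_mem 0 (Finset.mem_range.2 (by omega))]
  · simp
  · intro k _ hk
    rw [if_neg hk, zero_smul]
end

section
/- Let Λ^k be the space of elements of the graded algebra Λ that are homogeneous of degree k in the odd generators θ_j, and let N = θ·δ_θ where δ_θ = Σ_{r≥0}(−∂)^r ∘ ∂/∂θ_r (in one dependent variable). Then for every F ∈ Λ^k, the element N F − k·F is a total derivative, i.e., lies in ∂Λ^k. -/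
open MvPolynomial

/-- The normalization operator `N = θ·δ_θ`: left wedge by `θ = θ₀` composed with the
variational derivative `δ_θ = δ_{0,θ}`. -/
noncomputable def NLam (F : Lam) : Lam :=
  (hvarTheta 0 F).sum fun S a => if 0 ∈ S then 0 else Finsupp.single (insert 0 S) a

noncomputable def WL (m : ℕ) : Lam →ₗ[ℝ] Lam :=
  Finsupp.lsum ℝ fun T =>
    if m ∈ T then 0 else sgn m T • Finsupp.lsingle (insert m T)

noncomputable def DL : Lam →ₗ[ℝ] Lam :=
  Finsupp.lsum ℝ fun S =>
    (Finsupp.lsingle S).comp totD.toLinearMap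
      + ∑ k ∈ S, (if k + 1 ∈ S then 0 else Finsupp.lsingle (insert (k + 1) (S.erase k)))

lemma WL_single (m T a) : WL m (Finsupp.single T a) =
    if m ∈ T then 0 else sgn m T • Finsupp.single (insert m T) a := by
  simp [WL, Finsupp.lsum_single, apply_ite (fun f : A →ₗ[ℝ] Lam => f a)]

lemma DL_single (S a) : DL (Finsupp.single S a) =
    Finsupp.single S (totD a)
      + ∑ k ∈ S, (if k + 1 ∈ S then 0 else Finsupp.single (insert (k + 1) (S.erase k)) a) := by
  simp [DL, Finsupp.lsum_single, apply_ite (fun f : A →ₗ[ℝ] Lam => f a)]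

lemma sgn_zero (T : Finset ℕ) : sgn 0 T = 1 := by simp [sgn]

lemma sgn_mul_self (m : ℕ) (T : Finset ℕ) : sgn m T * sgn m T = 1 := by
  rw [sgn, ← pow_add]
  exact Even.neg_one_pow ⟨_, rfl⟩

lemma sgn_succ_of_not_mem {m : ℕ} {T : Finset ℕ} (h : m ∉ T) : sgn (m+1) T = sgn m T := by
  unfold sgn
  congr 2
  apply Finset.filter_congr
  intro j hj
  constructor
  · intro hjm; rcases Nat.lt_succ_iff_lt_or_eq.mp hjm with h'|h' 
    · simpa using h'
    · exact absurd (h' ▸ hj) h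
  · intro hjm; simpa using Nat.lt_succ_of_lt (by simpa using hjm)

lemma sgn_succ_of_mem {m : ℕ} {T : Finset ℕ} (h : m ∈ T) : sgn (m+1) T = - sgn m T := by
  unfold sgn
  have : T.filter (fun j => j < m + 1) = insert m (T.filter (fun j => j < m)) := by
    ext j
    simp only [Finset.mem_filter, Finset.mem_insert]
    constructor
    · rintro ⟨hj, hlt⟩
      rcases Nat.lt_succ_iff_lt_or_eq.mp hlt with h'|h'
      · exact Or.inr ⟨hj, h'⟩
      · exact Or.inl h'
    · rintro (rfl|⟨hj,hlt⟩)
      · exact ⟨h, Nat.lt_succ_self _⟩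
      · exact ⟨hj, Nat.lt_succ_of_lt hlt⟩
  rw [this, Finset.card_insert_of_notMem (by simp)]
  ring

lemma sgn_erase (m r : ℕ) (T : Finset ℕ) (h : m ≤ r) : sgn m (T.erase r) = sgn m T := by
  unfold sgn
  congr 2
  ext j
  simp only [Finset.mem_filter, Finset.mem_erase]
  constructor
  · rintro ⟨⟨_, hj⟩, hlt⟩; exact ⟨hj, hlt⟩
  · rintro ⟨hj, hlt⟩; exact ⟨⟨by omega, hj⟩, hlt⟩

lemma sgn_insert_ge (m r : ℕ) (T : Finset ℕ) (h : m ≤ r) : sgn m (insert r T) = sgn m T := by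
  unfold sgn
  congr 2
  rw [Finset.filter_insert, if_neg (by omega)]

lemma sgn_shift {m k : ℕ} {T : Finset ℕ} (hk : k ∈ T) (hk1 : k + 1 ∉ T) (hkm : k ≠ m) (hk1m : k + 1 ≠ m) :
    sgn m (insert (k+1) (T.erase k)) = sgn m T := by
  unfold sgn
  rw [Finset.filter_insert, Finset.filter_erase]
  by_cases h : k + 1 < m
  · rw [if_pos h, Finset.card_insert_of_notMem (by intro hc; simp only [Finset.mem_erase, Finset.mem_filter] at hc; exact hk1 hc.2.1), Finset.card_erase_of_mem
      (Finset.mem_filter.mpr ⟨hk, by omega⟩)]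
    have : 0 < (T.filter (fun j => j < m)).card :=
      Finset.card_pos.mpr ⟨k, Finset.mem_filter.mpr ⟨hk, by omega⟩⟩
    congr 1
    omega
  · rw [if_neg h, Finset.erase_eq_of_notMem (by intro hc; simp only [Finset.mem_erase, Finset.mem_filter] at hc; omega)]

lemma DW (m : ℕ) : DL.comp (WL m) = WL (m+1) + (WL m).comp DL := by
  apply Finsupp.lhom_ext
  intro T a
  simp only [LinearMap.comp_apply, LinearMap.add_apply, WL_single]
  by_cases hm : m ∈ T
  · rw [if_pos hm, map_zero, DL_single, map_add, map_sum, WL_single, if_pos hm]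
    have hsum : ∀ k ∈ T.erase m,
        WL m (if k + 1 ∈ T then 0 else Finsupp.single (insert (k + 1) (T.erase k)) a) = 0 := by
      intro k hk
      rw [Finset.mem_erase] at hk
      by_cases h : k + 1 ∈ T
      · rw [if_pos h, map_zero]
      · rw [if_neg h, WL_single, if_pos]
        by_cases hmk : m = k + 1
        · exact hmk ▸ Finset.mem_insert_self _ _
        · exact Finset.mem_insert_of_mem (Finset.mem_erase.mpr ⟨Ne.symm hk.1, hm⟩)
    rw [← Finset.add_sum_erase _ _ hm, Finset.sum_eq_zero hsum]
    by_cases h : m + 1 ∈ T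
    · rw [if_pos h, if_pos h, map_zero]
      simp
    · rw [if_neg h, if_neg h, WL_single, if_neg, sgn_succ_of_mem hm]
      · rw [sgn_insert_ge m (m+1) _ (by omega), sgn_erase m m _ le_rfl,
          Finset.insert_comm, Finset.insert_erase hm]
        simp
      · simp only [Finset.mem_insert, Finset.mem_erase]
        push_neg
        exact ⟨by omega, fun hc => absurd rfl hc⟩
  · rw [if_neg hm, map_smul, DL_single, Finset.sum_insert hm, DL_single, map_add, map_sum,
      WL_single, if_neg hm]
    have h1 : sgn m T • (if m + 1 ∈ insert m T then 0
          else Finsupp.single (insert (m + 1) ((insert m T).erase m)) a) =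
        (if m + 1 ∈ T then 0 else sgn (m+1) T • Finsupp.single (insert (m + 1) T) a) := by
      rw [Finset.erase_insert hm, sgn_succ_of_not_mem hm]
      by_cases h : m + 1 ∈ T
      · rw [if_pos (Finset.mem_insert_of_mem h), if_pos h, smul_zero]
      · rw [if_neg (by simp only [Finset.mem_insert]; push_neg; exact ⟨by omega, h⟩), if_neg h]
    have h2 : ∀ k ∈ T, sgn m T • (if k + 1 ∈ insert m T then 0
          else Finsupp.single (insert (k + 1) ((insert m T).erase k)) a) =
        WL m (if k + 1 ∈ T then 0 else Finsupp.single (insert (k + 1) (T.erase k)) a) := by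
      intro k hk
      have hkm : k ≠ m := fun e => hm (e ▸ hk)
      by_cases h : k + 1 ∈ T
      · rw [if_pos (Finset.mem_insert_of_mem h), if_pos h, smul_zero, map_zero]
      · rw [if_neg h, WL_single]
        by_cases hk1m : k + 1 = m
        · rw [if_pos (hk1m ▸ Finset.mem_insert_self _ _), smul_zero, if_pos
            (by rw [hk1m]; exact Finset.mem_insert_self _ _)]
        · have c1 : k + 1 ∉ insert m T := by
            simp only [Finset.mem_insert]
            push_neg
            exact ⟨hk1m, h⟩
          have c2 : m ∉ insert (k + 1) (T.erase k) := by
            simp only [Finset.mem_insert, Finset.mem_erase]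
            push_neg
            exact ⟨fun e => hk1m e.symm, fun _ => hm⟩
          rw [if_neg c1, if_neg c2, Finset.erase_insert_of_ne (Ne.symm hkm),
            Finset.insert_comm, sgn_shift hk h hkm hk1m]
    rw [smul_add, smul_add, Finset.smul_sum, h1, Finset.sum_congr rfl h2]
    abel

noncomputable def PL (i : ℕ) : Lam →ₗ[ℝ] Lam :=
  Finsupp.lsum ℝ fun S => if i ∈ S then sgn i S • Finsupp.lsingle (S.erase i) else 0

lemma pTheta_eq (i : ℕ) (F : Lam) : pTheta i F = PL i F := by
  rw [pTheta, PL, Finsupp.lsum_apply]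
  exact Finsupp.sum_congr fun T _ => by
    simp [apply_ite (fun f : A →ₗ[ℝ] Lam => f (F T))]

lemma DLam_eq (F : Lam) : DLam F = DL F := by
  rw [DLam, DL, Finsupp.lsum_apply]
  exact Finsupp.sum_congr fun T _ => by
    simp [apply_ite (fun f : A →ₗ[ℝ] Lam => f (F T))]

lemma WL_apply (m : ℕ) (F : Lam) :
    WL m F = F.sum fun T a => if m ∈ T then 0 else sgn m T • Finsupp.single (insert m T) a := by
  rw [WL, Finsupp.lsum_apply]
  exact Finsupp.sum_congr fun T _ => by
    simp [apply_ite (fun f : A →ₗ[ℝ] Lam => f (F T))]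

lemma NLam_eq (F : Lam) : NLam F = WL 0 (hvarTheta 0 F) := by
  rw [NLam, WL_apply]
  exact Finsupp.sum_congr fun T _ => by
    by_cases h : 0 ∈ T
    · rw [if_pos h, if_pos h]
    · rw [if_neg h, if_neg h, sgn_zero, one_smul]

lemma DLam_zero : DLam 0 = 0 := by rw [DLam_eq, map_zero]
lemma DLam_iter_zero (r : ℕ) : DLam^[r] (0 : Lam) = 0 := by
  induction r with
  | zero => rfl
  | succ r ih => rw [Function.iterate_succ_apply, DLam_zero, ih]
lemma DLam_iter_add (r : ℕ) (F G : Lam) :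
    DLam^[r] (F + G) = DLam^[r] F + DLam^[r] G := by
  induction r generalizing F G with
  | zero => rfl
  | succ r ih => rw [Function.iterate_succ_apply, DLam_add, ih,
      Function.iterate_succ_apply, Function.iterate_succ_apply]
lemma DLam_iter_smul (r : ℕ) (c : ℝ) (F : Lam) :
    DLam^[r] (c • F) = c • DLam^[r] F := by
  induction r generalizing F with
  | zero => rfl
  | succ r ih => rw [Function.iterate_succ_apply, DLam_smul, ih, Function.iterate_succ_apply]
lemma DLam_finset_sum {ι : Type*} (s : Finset ι) (f : ι → Lam) :
    DLam (∑ i ∈ s, f i) = ∑ i ∈ s, DLam (f i) := by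
  simp [DLam_eq, map_sum]

lemma deg_single {S : Finset ℕ} {c : ℕ} (a : A) (h : S.card = c) :
    ∀ T ∈ (Finsupp.single S a : Lam).support, T.card = c := by
  intro T hT
  have := Finsupp.support_single_subset hT
  rw [Finset.mem_singleton] at this
  rw [this, h]

lemma deg_add {F G : Lam} {c : ℕ} (hF : ∀ T ∈ F.support, T.card = c)
    (hG : ∀ T ∈ G.support, T.card = c) : ∀ T ∈ (F + G).support, T.card = c := by
  intro T hT
  rcases Finset.mem_union.mp (Finsupp.support_add hT) with h | h
  · exact hF T h
  · exact hG T h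

lemma deg_smul {F : Lam} {c : ℕ} (r : ℝ) (hF : ∀ T ∈ F.support, T.card = c) :
    ∀ T ∈ (r • F).support, T.card = c := fun T hT => hF T (Finsupp.support_smul hT)

lemma deg_sum {ι : Type*} {s : Finset ι} {f : ι → Lam} {c : ℕ}
    (h : ∀ i ∈ s, ∀ T ∈ (f i).support, T.card = c) :
    ∀ T ∈ (∑ i ∈ s, f i).support, T.card = c := by
  intro T hT
  obtain ⟨i, hi, hT⟩ := Finset.mem_biUnion.mp (Finsupp.support_finset_sum hT)
  exact h i hi T hT

lemma deg_zero {c : ℕ} : ∀ T ∈ (0 : Lam).support, T.card = c := by simp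

lemma deg_DLam {F : Lam} {c : ℕ} (hF : ∀ T ∈ F.support, T.card = c) :
    ∀ T ∈ (DLam F).support, T.card = c := by
  intro T hT
  rw [DLam] at hT
  obtain ⟨S, hS, hT⟩ := Finset.mem_biUnion.mp (Finsupp.support_sum hT)
  rcases Finset.mem_union.mp (Finsupp.support_add hT) with h | h
  · have := Finsupp.support_single_subset h
    rw [Finset.mem_singleton] at this
    rw [this]
    exact hF S hS
  · obtain ⟨k, hk, hT⟩ := Finset.mem_biUnion.mp (Finsupp.support_finset_sum h)
    by_cases hk1 : k + 1 ∈ S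
    · rw [if_pos hk1] at hT
      simp at hT
    · rw [if_neg hk1] at hT
      have := Finsupp.support_single_subset hT
      rw [Finset.mem_singleton] at this
      rw [this, Finset.card_insert_of_notMem (fun hc => hk1 (Finset.mem_of_mem_erase hc)),
        Finset.card_erase_of_mem hk]
      have h1 : 0 < S.card := Finset.card_pos.mpr ⟨k, hk⟩
      have h2 := hF S hS
      omega

lemma deg_DLam_iter {F : Lam} {c : ℕ} (r : ℕ) (hF : ∀ T ∈ F.support, T.card = c) :
    ∀ T ∈ (DLam^[r] F).support, T.card = c := by
  induction r generalizing F with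
  | zero => exact hF
  | succ r ih => exact Function.iterate_succ_apply _ _ _ ▸ ih (deg_DLam hF)

lemma deg_WL {F : Lam} {c : ℕ} (m : ℕ) (hF : ∀ T ∈ F.support, T.card = c) :
    ∀ T ∈ (WL m F).support, T.card = c + 1 := by
  intro T hT
  rw [WL_apply] at hT
  obtain ⟨S, hS, hT⟩ := Finset.mem_biUnion.mp (Finsupp.support_sum hT)
  by_cases hm : m ∈ S
  · rw [if_pos hm] at hT
    simp at hT
  · rw [if_neg hm] at hT
    have := Finsupp.support_single_subset (Finsupp.support_smul hT)
    rw [Finset.mem_singleton] at this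
    rw [this, Finset.card_insert_of_notMem hm, hF S hS]

lemma key_s17 (r : ℕ) : ∀ (m c : ℕ) (X : Lam), (∀ T ∈ X.support, T.card = c) →
    ∃ H : Lam, (∀ T ∈ H.support, T.card = c + 1) ∧
      WL m (DLam^[r] X) = ((-1 : ℝ) ^ r) • WL (m + r) X + DLam H := by
  induction r with
  | zero =>
    intro m c X hX
    exact ⟨0, deg_zero, by simp [DLam_zero]⟩
  | succ r ih =>
    intro m c X hX
    obtain ⟨H₁, hH₁, e₁⟩ := ih m c (DLam X) (deg_DLam hX)
    refine ⟨(-1 : ℝ) ^ r • WL (m + r) X + H₁, deg_add (deg_smul _ (deg_WL _ hX)) hH₁, ?_⟩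
    rw [Function.iterate_succ_apply, e₁, DLam_add, DLam_smul]
    have hDW := congrArg (fun φ : Lam →ₗ[ℝ] Lam => φ X) (DW (m + r))
    simp only [LinearMap.comp_apply, LinearMap.add_apply] at hDW
    rw [DLam_eq X, DLam_eq (WL (m + r) X), hDW]
    have : ((-1 : ℝ) ^ (r + 1)) = -((-1 : ℝ) ^ r) := by ring
    rw [this, show m + (r + 1) = (m + r) + 1 from rfl]
    module

lemma pTheta_single (i : ℕ) (S : Finset ℕ) (a : A) :
    pTheta i (Finsupp.single S a) =
      if i ∈ S then sgn i S • Finsupp.single (S.erase i) a else 0 := by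
  rw [pTheta]
  apply Finsupp.sum_single_index
  by_cases h : i ∈ S <;> simp [h]

lemma pTheta_zero_of (i : ℕ) (F : Lam) (h : ∀ T ∈ F.support, i ∉ T) : pTheta i F = 0 := by
  rw [pTheta, Finsupp.sum]
  exact Finset.sum_eq_zero fun T hT => by rw [if_neg (h T hT)]

lemma hvar_rep (F : Lam) (R : Finset ℕ) (hR : ∀ T ∈ F.support, T ⊆ R) :
    hvarTheta 0 F = ∑ r ∈ R, ((-1 : ℝ) ^ r) • DLam^[r] (pTheta r F) := by
  rw [hvarTheta]
  simp only [Nat.zero_add, Nat.choose_zero_right, Nat.cast_one, mul_one]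
  apply finsum_eq_sum_of_support_subset
  intro r hr
  by_contra hrR
  apply hr
  have : pTheta r F = 0 := pTheta_zero_of r F fun T hT hrT => hrR (hR T hT hrT)
  simp [this, DLam_iter_zero]

lemma NLam_add (F G : Lam) : NLam (F + G) = NLam F + NLam G := by
  rw [NLam_eq, NLam_eq, NLam_eq, ← map_add]
  congr 1
  classical
  set R := (F.support ∪ G.support).biUnion id with hRdef
  have hF : ∀ T ∈ F.support, T ⊆ R := fun T hT x hx =>
    Finset.mem_biUnion.mpr ⟨T, Finset.mem_union_left _ hT, hx⟩
  have hG : ∀ T ∈ G.support, T ⊆ R := fun T hT x hx =>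
    Finset.mem_biUnion.mpr ⟨T, Finset.mem_union_right _ hT, hx⟩
  have hFG : ∀ T ∈ (F + G).support, T ⊆ R := fun T hT => by
    rcases Finset.mem_union.mp (Finsupp.support_add hT) with h | h
    · exact hF T h
    · exact hG T h
  rw [hvar_rep F R hF, hvar_rep G R hG, hvar_rep (F + G) R hFG, ← Finset.sum_add_distrib]
  refine Finset.sum_congr rfl fun r _ => ?_
  rw [pTheta_eq, pTheta_eq, pTheta_eq, map_add, DLam_iter_add, smul_add]

lemma NLam_zero : NLam 0 = 0 := by
  rw [NLam_eq, hvar_rep 0 ∅ (by simp), Finset.sum_empty, map_zero]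

lemma main_single (k : ℕ) (S : Finset ℕ) (a : A) (hS : S.card = k) :
    ∃ G : Lam, (∀ T ∈ G.support, T.card = k) ∧
      NLam (Finsupp.single S a) - (k : ℝ) • Finsupp.single S a = DLam G := by
  have hkey : ∀ r : ℕ, ∃ H : Lam, (∀ T ∈ H.support, T.card = (S.erase r).card + 1) ∧
      WL 0 (DLam^[r] (Finsupp.single (S.erase r) a)) =
        ((-1 : ℝ) ^ r) • WL (0 + r) (Finsupp.single (S.erase r) a) + DLam H :=
    fun r => key_s17 r 0 _ _ (deg_single a rfl)
  choose H hdeg heq using hkey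
  have hcard : ∀ r ∈ S, (S.erase r).card + 1 = k := fun r hr => by
    rw [Finset.card_erase_of_mem hr]
    have : 0 < S.card := Finset.card_pos.mpr ⟨r, hr⟩
    omega
  refine ⟨∑ r ∈ S, ((-1 : ℝ) ^ r * sgn r S) • H r, ?_, ?_⟩
  · exact deg_sum fun r hr => (hcard r hr) ▸ deg_smul _ (hdeg r)
  · have hrep := hvar_rep (Finsupp.single S a) S (fun T hT => by
      have h := Finsupp.support_single_subset hT
      rw [Finset.mem_singleton] at h
      rw [h])
    have hterm : ∀ r ∈ S,
        (WL 0) (((-1 : ℝ) ^ r) • DLam^[r] (pTheta r (Finsupp.single S a))) =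
        Finsupp.single S a + DLam (((-1 : ℝ) ^ r * sgn r S) • H r) := by
      intro r hr
      have h1 : (-1 : ℝ) ^ r * (-1) ^ r = 1 := by
        rw [← pow_add]; exact Even.neg_one_pow ⟨r, rfl⟩
      have h2 := sgn_mul_self r S
      rw [pTheta_single, if_pos hr, DLam_iter_smul, map_smul, map_smul, heq, Nat.zero_add,
        WL_single, if_neg (Finset.notMem_erase r S), sgn_erase r r S le_rfl,
        Finset.insert_erase hr, DLam_smul]
      match_scalars
      · linear_combination (sgn r S * sgn r S) * h1 + h2
      · ring
    rw [NLam_eq, hrep, map_sum, Finset.sum_congr rfl hterm, Finset.sum_add_distrib,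
      Finset.sum_const, ← DLam_finset_sum, hS, Nat.cast_smul_eq_nsmul ℝ k,
      add_sub_cancel_left]


/-- For `F ∈ Λ^k` (homogeneous of degree `k` in the odd generators),
`N F − k·F` is a total derivative, lying in `∂Λ^k`. -/
theorem normalization (k : ℕ) (F : Lam) (hF : ∀ S ∈ F.support, S.card = k) :
    ∃ G : Lam, (∀ S ∈ G.support, S.card = k) ∧ NLam F - (k : ℝ) • F = DLam G := by
  revert hF
  induction F using Finsupp.induction with
  | zero => exact fun _ => ⟨0, deg_zero, by simp [NLam_zero, DLam_zero]⟩
  | single_add S b F hSF hb ih =>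
    intro hF
    have hFS : F S = 0 := Finsupp.notMem_support_iff.mp hSF
    have hS : S.card = k := by
      apply hF S
      rw [Finsupp.mem_support_iff, Finsupp.add_apply, Finsupp.single_eq_same, hFS, add_zero]
      exact hb
    have hFdeg : ∀ T ∈ F.support, T.card = k := by
      intro T hT
      apply hF T
      have hTS : S ≠ T := fun e => hSF (e ▸ hT)
      rw [Finsupp.mem_support_iff, Finsupp.add_apply, Finsupp.single_eq_of_ne hTS.symm, zero_add]
      exact Finsupp.mem_support_iff.mp hT
    obtain ⟨G1, hG1, e1⟩ := main_single k S b hS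
    obtain ⟨G2, hG2, e2⟩ := ih hFdeg
    refine ⟨G1 + G2, deg_add hG1 hG2, ?_⟩
    rw [NLam_add, DLam_add, ← e1, ← e2, smul_add]
    abel
end
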